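/- Let (V, R, α ↦ α∨) be a reduced crystallographic root system with coroot lattice Q∨, and let Λ∨ ⊆ V be a subgroup such that Q∨ ⊆ Λ∨ and α(Λ∨) ⊆ ℤ for every root α. If the abelian group Λ∨/Q∨ is torsion-free, then for every root α and every x ∈ V satisfying x − s_α(x) ∈ Λ∨ (equivalently α(x)·α∨ ∈ Λ∨), the real number α(x) is an integer. -/

import Mathlib

open Module

/-- A reduced crystallographic root system on a real vector space `V`:
the roots are a finite set of non-zero linear functionals on `V`, each root `α`
has a coroot `α∨ ∈ V` with `α(α∨) = 2`, pairings of roots with coroots are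
integers, the reflections `s_α : x ↦ x - α(x)·α∨` (resp. their dual actions
`λ ↦ λ - λ(α∨)·α`) permute the coroots (resp. the roots), and the only roots
proportional to a root `α` are `±α`. -/
structure RedCrystRootSystem (V : Type*) [AddCommGroup V] [Module ℝ V] where
  R : Finset (Module.Dual ℝ V)
  coroot : Module.Dual ℝ V → V
  ne_zero : ∀ α ∈ R, α ≠ 0
  root_coroot_two : ∀ α ∈ R, α (coroot α) = 2
  crystallographic : ∀ α ∈ R, ∀ β ∈ R, ∃ n : ℤ, β (coroot α) = (n : ℝ)
  refl_root_mem : ∀ α ∈ R, ∀ β ∈ R, β - β (coroot α) • α ∈ R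
  refl_coroot_mem : ∀ α ∈ R, ∀ β ∈ R,
    ∃ γ ∈ R, coroot β - α (coroot β) • coroot α = coroot γ
  reduced : ∀ α ∈ R, ∀ β ∈ R, ∀ c : ℝ, β = c • α → β = α ∨ β = -α

namespace RedCrystRootSystem

variable {V : Type*} [AddCommGroup V] [Module ℝ V] (S : RedCrystRootSystem V)

/-- The reflection `s_α : x ↦ x - α(x)·α∨` associated to a root `α`, as a linear map. -/
def reflMap (α : Module.Dual ℝ V) : V →ₗ[ℝ] V :=
  LinearMap.id - α.smulRight (S.coroot α)

@[simp] lemma reflMap_apply (α : Module.Dual ℝ V) (x : V) :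
    S.reflMap α x = x - α x • S.coroot α := rfl

/-- A linear automorphism of `V` is a reflection of the root system if it is
given by `x ↦ x - α(x)·α∨` for some root `α`. -/
def IsReflection (e : V ≃ₗ[ℝ] V) : Prop :=
  ∃ α ∈ S.R, ∀ x : V, e x = x - α x • S.coroot α

/-- The Weyl group: the subgroup of linear automorphisms of `V` generated by the
reflections `s_α`, `α ∈ R`. -/
def weylGroup : Subgroup (V ≃ₗ[ℝ] V) :=
  Subgroup.closure {e : V ≃ₗ[ℝ] V | S.IsReflection e}

/-- The coroot lattice `Q∨`: the additive subgroup of `V` generated by the coroots. -/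
def corootLattice : AddSubgroup V :=
  AddSubgroup.closure (S.coroot '' ↑S.R)

end RedCrystRootSystem


namespace RedCrystRootSystemAux

/-- Selection of representatives modulo `±` from a finite set. -/
lemma exists_sel {A : Type*} [AddCommGroup A] [DecidableEq A] (T : Finset A)
    (hT : ∀ a ∈ T, a ≠ -a) :
    ∃ P : Finset A, P ⊆ T ∧ (∀ a ∈ T, a ∈ P ∨ -a ∈ P) ∧ ∀ a ∈ P, -a ∉ P := by
  classical
  induction T using Finset.induction_on with
  | empty => exact ⟨∅, by simp⟩
  | @insert a T' haT' ih =>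
    obtain ⟨P, hPT, hPcov, hPdisj⟩ := ih (fun b hb => hT b (Finset.mem_insert_of_mem hb))
    by_cases hc : a ∈ P ∨ -a ∈ P
    · exact ⟨P, hPT.trans (Finset.subset_insert _ _), by
        intro b hb
        rcases Finset.mem_insert.mp hb with rfl | hb
        · exact hc
        · exact hPcov b hb, hPdisj⟩
    · push_neg at hc
      refine ⟨insert a P, ?_, ?_, ?_⟩
      · exact Finset.insert_subset_insert _ hPT
      · intro b hb
        rcases Finset.mem_insert.mp hb with rfl | hb
        · exact Or.inl (Finset.mem_insert_self _ _)
        · rcases hPcov b hb with h | h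
          · exact Or.inl (Finset.mem_insert_of_mem h)
          · exact Or.inr (Finset.mem_insert_of_mem h)
      · intro b hb hnb
        rcases Finset.mem_insert.mp hb with rfl | hb
        · rcases Finset.mem_insert.mp hnb with h | h
          · exact hT b (Finset.mem_insert_self _ _) h.symm
          · exact hc.2 h
        · rcases Finset.mem_insert.mp hnb with h | h
          · exact hc.2 (by rw [← h, neg_neg]; exact hb)
          · exact hPdisj b hb h

end RedCrystRootSystemAux


section Aux

open Finset

namespace RedCrystRootSystem

variable {V : Type*} [AddCommGroup V] [Module ℝ V] (S : RedCrystRootSystem V)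

/-- The canonical invariant bilinear form `B(x,y) = ∑_{β ∈ R} β(x)β(y)`. -/
noncomputable def BB (x y : V) : ℝ := ∑ β ∈ S.R, β x * β y

lemma BB_symm (x y : V) : S.BB x y = S.BB y x :=
  Finset.sum_congr rfl fun _ _ => mul_comm _ _

lemma BB_add_left (x y z : V) : S.BB (x + y) z = S.BB x z + S.BB y z := by
  simp [BB, add_mul, Finset.sum_add_distrib]

lemma BB_sub_left (x y z : V) : S.BB (x - y) z = S.BB x z - S.BB y z := by
  simp [BB, sub_mul, Finset.sum_sub_distrib]

lemma BB_smul_left (c : ℝ) (x y : V) : S.BB (c • x) y = c * S.BB x y := by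
  simp [BB, Finset.mul_sum, smul_eq_mul, mul_assoc]

lemma BB_add_right (x y z : V) : S.BB x (y + z) = S.BB x y + S.BB x z := by
  rw [BB_symm, BB_add_left, BB_symm S y x, BB_symm S z x]

lemma BB_sub_right (x y z : V) : S.BB x (y - z) = S.BB x y - S.BB x z := by
  rw [BB_symm, BB_sub_left, BB_symm S y x, BB_symm S z x]

lemma BB_smul_right (c : ℝ) (x y : V) : S.BB x (c • y) = c * S.BB x y := by
  rw [BB_symm, BB_smul_left, BB_symm S y x]

lemma BB_neg_right (x y : V) : S.BB x (-y) = -S.BB x y := by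
  have h := S.BB_sub_right x 0 y
  rw [zero_sub] at h
  rw [h]
  have h0 : S.BB x 0 = 0 := by
    have := S.BB_smul_right 0 x 0
    simpa using this
  rw [h0]; ring

lemma BB_nonneg (x : V) : 0 ≤ S.BB x x :=
  Finset.sum_nonneg fun _ _ => mul_self_nonneg _

/-- Cauchy–Schwarz for the positive semidefinite form `BB`. -/
lemma BB_sq_le (x y : V) : S.BB x y ^ 2 ≤ S.BB x x * S.BB y y := by
  have h : ∀ t : ℝ, 0 ≤ S.BB y y * (t * t) + 2 * S.BB x y * t + S.BB x x := by
    intro t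
    have h0 := S.BB_nonneg (x + t • y)
    have e : S.BB (x + t • y) (x + t • y)
        = S.BB y y * (t * t) + 2 * S.BB x y * t + S.BB x x := by
      simp only [S.BB_add_left, S.BB_add_right, S.BB_smul_left, S.BB_smul_right]
      rw [S.BB_symm y x]
      ring
    rw [e] at h0
    exact h0
  have hd := discrim_le_zero h
  rw [discrim] at hd
  nlinarith [hd]

lemma BB_null {z : V} (h : S.BB z z = 0) (x : V) : S.BB x z = 0 := by
  have h1 := S.BB_sq_le x z
  rw [h, mul_zero] at h1
  have h2 := sq_nonneg (S.BB x z)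
  have h3 : S.BB x z ^ 2 = 0 := le_antisymm h1 h2
  exact pow_eq_zero_iff two_ne_zero |>.mp h3

lemma sum_reflect {γ : Module.Dual ℝ V} (hγ : γ ∈ S.R) (f : Module.Dual ℝ V → ℝ) :
    ∑ β ∈ S.R, f (β - β (S.coroot γ) • γ) = ∑ β ∈ S.R, f β := by
  have h2 : γ (S.coroot γ) = 2 := S.root_coroot_two γ hγ
  have hinv : ∀ β : Module.Dual ℝ V,
      (β - β (S.coroot γ) • γ) - (β - β (S.coroot γ) • γ) (S.coroot γ) • γ = β := by
    intro β
    have : (β - β (S.coroot γ) • γ) (S.coroot γ) = - β (S.coroot γ) := by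
      simp [h2]; ring
    rw [this, sub_sub, ← add_smul]
    norm_num
  refine Finset.sum_nbij' (fun β => β - β (S.coroot γ) • γ) (fun β => β - β (S.coroot γ) • γ)
    ?_ ?_ ?_ ?_ ?_
  · intro β hβ; exact S.refl_root_mem γ hγ β hβ
  · intro β hβ; exact S.refl_root_mem γ hγ β hβ
  · intro β _; exact hinv β
  · intro β _; exact hinv β
  · intro β _; rfl

lemma BB_refl {γ : Module.Dual ℝ V} (hγ : γ ∈ S.R) (x y : V) :
    S.BB (x - γ x • S.coroot γ) (y - γ y • S.coroot γ) = S.BB x y := by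
  have h := S.sum_reflect hγ (fun δ => δ x * δ y)
  show (∑ β ∈ S.R, β (x - γ x • S.coroot γ) * β (y - γ y • S.coroot γ)) = ∑ β ∈ S.R, β x * β y
  rw [← h]
  refine Finset.sum_congr rfl fun β _ => ?_
  simp only [map_sub, map_smul, smul_eq_mul, LinearMap.sub_apply, LinearMap.smul_apply]
  ring

/-- The key identity `2 B(x, γ∨) = γ(x) B(γ∨, γ∨)`. -/
lemma BB_coroot {γ : Module.Dual ℝ V} (hγ : γ ∈ S.R) (x : V) :
    2 * S.BB x (S.coroot γ) = γ x * S.BB (S.coroot γ) (S.coroot γ) := by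
  have h2 : γ (S.coroot γ) = 2 := S.root_coroot_two γ hγ
  have h := S.BB_refl hγ x (S.coroot γ)
  rw [h2] at h
  have e : S.coroot γ - (2 : ℝ) • S.coroot γ = -(S.coroot γ) := by
    rw [two_smul]; abel
  rw [e, BB_neg_right, BB_sub_left, BB_smul_left] at h
  linarith [h]

lemma four_le_BB {γ : Module.Dual ℝ V} (hγ : γ ∈ S.R) :
    4 ≤ S.BB (S.coroot γ) (S.coroot γ) := by
  have h2 : γ (S.coroot γ) = 2 := S.root_coroot_two γ hγ
  calc (4 : ℝ) = γ (S.coroot γ) * γ (S.coroot γ) := by rw [h2]; norm_num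
    _ ≤ ∑ β ∈ S.R, β (S.coroot γ) * β (S.coroot γ) :=
        Finset.single_le_sum (f := fun β : Module.Dual ℝ V => β (S.coroot γ) * β (S.coroot γ))
          (fun i _ => mul_self_nonneg _) hγ
    _ = S.BB (S.coroot γ) (S.coroot γ) := rfl

lemma BB_coroot_pos {γ : Module.Dual ℝ V} (hγ : γ ∈ S.R) :
    0 < S.BB (S.coroot γ) (S.coroot γ) := lt_of_lt_of_le (by norm_num) (S.four_le_BB hγ)

lemma BB_expand_sub (c d : ℝ) (u w : V) :
    S.BB (c • u - d • w) (c • u - d • w)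
      = c * c * S.BB u u - 2 * (c * d) * S.BB u w + d * d * S.BB w w := by
  simp only [S.BB_sub_left, S.BB_sub_right, S.BB_smul_left, S.BB_smul_right]
  rw [S.BB_symm w u]
  ring

/-- Equality in Cauchy–Schwarz forces proportionality of the roots. -/
lemma eq_or_neg_of_sq {β γ : Module.Dual ℝ V} (hβ : β ∈ S.R) (hγ : γ ∈ S.R)
    (h : S.BB (S.coroot β) (S.coroot γ) ^ 2
      = S.BB (S.coroot β) (S.coroot β) * S.BB (S.coroot γ) (S.coroot γ)) :
    γ = β ∨ γ = -β := by
  have hNbpos : 0 < S.BB (S.coroot β) (S.coroot β) := S.BB_coroot_pos hβ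
  have hNgpos : 0 < S.BB (S.coroot γ) (S.coroot γ) := S.BB_coroot_pos hγ
  have hzz : S.BB
      (S.BB (S.coroot β) (S.coroot γ) • S.coroot β - S.BB (S.coroot β) (S.coroot β) • S.coroot γ)
      (S.BB (S.coroot β) (S.coroot γ) • S.coroot β - S.BB (S.coroot β) (S.coroot β) • S.coroot γ)
      = 0 := by
    rw [S.BB_expand_sub]
    nlinarith [h]
  have hrel : ∀ x : V, S.BB (S.coroot β) (S.coroot γ) * S.BB x (S.coroot β)
      = S.BB (S.coroot β) (S.coroot β) * S.BB x (S.coroot γ) := by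
    intro x
    have hn := S.BB_null hzz x
    rw [S.BB_sub_right, S.BB_smul_right, S.BB_smul_right] at hn
    linarith [hn]
  have hfun : γ = (S.BB (S.coroot β) (S.coroot γ) / S.BB (S.coroot γ) (S.coroot γ)) • β := by
    ext x
    have h1 := S.BB_coroot hβ x
    have h2 := S.BB_coroot hγ x
    have h3 := hrel x
    have key : S.BB (S.coroot β) (S.coroot β) * (γ x * S.BB (S.coroot γ) (S.coroot γ))
        = S.BB (S.coroot β) (S.coroot β) * (S.BB (S.coroot β) (S.coroot γ) * β x) := by
      linear_combination S.BB (S.coroot β) (S.coroot γ) * h1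
        - S.BB (S.coroot β) (S.coroot β) * h2 - 2 * h3
    have h5 : γ x * S.BB (S.coroot γ) (S.coroot γ)
        = S.BB (S.coroot β) (S.coroot γ) * β x :=
      mul_left_cancel₀ (ne_of_gt hNbpos) key
    have hx : γ x = (S.BB (S.coroot β) (S.coroot γ) / S.BB (S.coroot γ) (S.coroot γ)) * β x := by
      field_simp
      linarith [h5]
    simpa [LinearMap.smul_apply, smul_eq_mul] using hx
  exact S.reduced β hβ γ hγ _ hfun

lemma coroot_mem_lattice {β : Module.Dual ℝ V} (hβ : β ∈ S.R) :
    S.coroot β ∈ S.corootLattice :=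
  AddSubgroup.subset_closure ⟨β, by simpa using hβ, rfl⟩

/-- Integrality on the coroot lattice. -/
lemma lattice_int (f : Module.Dual ℝ V) (r : ℝ)
    (hf : ∀ β ∈ S.R, ∃ n : ℤ, f (S.coroot β) = n * r) :
    ∀ y ∈ S.corootLattice, ∃ n : ℤ, f y = n * r := by
  intro y hy
  refine AddSubgroup.closure_induction ?_ ?_ ?_ ?_ hy
  · rintro x ⟨β, hβ, rfl⟩
    exact hf β (by simpa using hβ)
  · exact ⟨0, by simp⟩
  · rintro x y' _ _ ⟨n, hn⟩ ⟨k, hk⟩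
    exact ⟨n + k, by rw [map_add, hn, hk]; push_cast; ring⟩
  · rintro x _ ⟨n, hn⟩
    exact ⟨-n, by rw [map_neg, hn]; push_cast; ring⟩

open scoped Classical in
/-- An integer pairing matrix chosen from the crystallographic condition. -/
noncomputable def pr (β γ : Module.Dual ℝ V) : ℤ :=
  if h : β ∈ S.R ∧ γ ∈ S.R then (S.crystallographic γ h.2 β h.1).choose else 0

lemma pr_spec {β γ : Module.Dual ℝ V} (hβ : β ∈ S.R) (hγ : γ ∈ S.R) :
    β (S.coroot γ) = ((S.pr β γ : ℤ) : ℝ) := by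
  rw [pr, dif_pos ⟨hβ, hγ⟩]
  exact (S.crystallographic γ hγ β hβ).choose_spec


lemma root_int_on_lattice {β : Module.Dual ℝ V} (hβ : β ∈ S.R) {y : V}
    (hy : y ∈ S.corootLattice) : ∃ n : ℤ, β y = n := by
  obtain ⟨n, hn⟩ := S.lattice_int β 1
    (fun δ hδ => ⟨S.pr β δ, by rw [S.pr_spec hβ hδ]; ring⟩) y hy
  exact ⟨n, by simpa using hn⟩

lemma even_pair {γ β : Module.Dual ℝ V} (hγ : γ ∈ S.R) {m' : V}
    (hm'L : m' ∈ S.corootLattice) (hm' : S.coroot β = (2 : ℝ) • m') :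
    ∃ n : ℤ, γ (S.coroot β) = 2 * n := by
  obtain ⟨n, hn⟩ := S.root_int_on_lattice hγ hm'L
  exact ⟨n, by rw [hm', map_smul, smul_eq_mul, hn]⟩

/-- Two roots whose coroots are both divisible by 2 in the coroot lattice are either
orthogonal (w.r.t. the canonical form) or proportional. -/
lemma half_ortho {β δ : Module.Dual ℝ V} (hβ : β ∈ S.R) (hδ : δ ∈ S.R)
    {mb md : V} (hmbL : mb ∈ S.corootLattice) (hmb : S.coroot β = (2 : ℝ) • mb)
    (hmdL : md ∈ S.corootLattice) (hmd : S.coroot δ = (2 : ℝ) • md)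
    (hB : S.BB (S.coroot β) (S.coroot δ) ≠ 0) : δ = β ∨ δ = -β := by
  obtain ⟨k, hk⟩ := S.even_pair hβ hmdL hmd
  obtain ⟨l, hl⟩ := S.even_pair hδ hmbL hmb
  have h1 := S.BB_coroot hβ (S.coroot δ)
  have h2 := S.BB_coroot hδ (S.coroot β)
  have hsymm := S.BB_symm (S.coroot β) (S.coroot δ)
  have hNb := S.four_le_BB hβ
  have hNd := S.four_le_BB hδ
  rw [hk] at h1
  rw [hl] at h2
  have e1 : S.BB (S.coroot β) (S.coroot δ) = k * S.BB (S.coroot β) (S.coroot β) := by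
    rw [hsymm]; linarith [h1]
  have e2 : S.BB (S.coroot β) (S.coroot δ) = l * S.BB (S.coroot δ) (S.coroot δ) := by
    linarith [h2]
  have hBsq : S.BB (S.coroot β) (S.coroot δ) ^ 2
      = ((k : ℝ) * l) * (S.BB (S.coroot β) (S.coroot β) * S.BB (S.coroot δ) (S.coroot δ)) := by
    linear_combination ((l : ℝ) * S.BB (S.coroot δ) (S.coroot δ)) * e1
      + S.BB (S.coroot β) (S.coroot δ) * e2
  have hcs := S.BB_sq_le (S.coroot β) (S.coroot δ)
  have hprodpos : 0 < S.BB (S.coroot β) (S.coroot β) * S.BB (S.coroot δ) (S.coroot δ) := by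
    nlinarith
  have hklpos : 0 < (k : ℝ) * l := by
    rcases lt_trichotomy ((k : ℝ) * l) 0 with h | h | h
    · nlinarith [sq_nonneg (S.BB (S.coroot β) (S.coroot δ))]
    · exfalso; apply hB
      have : S.BB (S.coroot β) (S.coroot δ) ^ 2 = 0 := by rw [hBsq, h]; ring
      exact pow_eq_zero_iff two_ne_zero |>.mp this
    · exact h
  have hklle : (k : ℝ) * l ≤ 1 := by nlinarith
  have hklZ : k * l = 1 := by
    have h1' : 0 < k * l := by exact_mod_cast (by push_cast; exact hklpos : (0:ℝ) < ((k*l : ℤ) : ℝ))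
    have h2' : k * l ≤ 1 := by exact_mod_cast (by push_cast; exact hklle : ((k*l : ℤ) : ℝ) ≤ 1)
    omega
  have hone : ((k : ℝ) * l) = 1 := by exact_mod_cast (by push_cast; rfl : ((k*l : ℤ):ℝ) = (k:ℝ)*l) ▸ (by exact_mod_cast hklZ : ((k*l:ℤ):ℝ) = 1)
  exact S.eq_or_neg_of_sq hβ hδ (by rw [hBsq, hone, one_mul])

/-- Analysis of a root `β` with halved coroot pairing oddly with a root `γ`. -/
lemma odd_analysis {β γ : Module.Dual ℝ V} (hβ : β ∈ S.R) (hγ : γ ∈ S.R)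
    {mb : V} (hmbL : mb ∈ S.corootLattice) (hmb : S.coroot β = (2 : ℝ) • mb)
    {l : ℤ} (hl : β (S.coroot γ) = l) (hodd : Odd l) :
    (l = 1 ∨ l = -1) ∧ γ (S.coroot β) = 2 * l
      ∧ S.BB (S.coroot β) (S.coroot γ) = l * S.BB (S.coroot γ) (S.coroot γ)
      ∧ S.BB (S.coroot β) (S.coroot β) = 2 * S.BB (S.coroot γ) (S.coroot γ) := by
  obtain ⟨t, ht⟩ := hodd
  obtain ⟨k, hk⟩ := S.even_pair hγ hmbL hmb
  have h1 := S.BB_coroot hβ (S.coroot γ)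
  have h2 := S.BB_coroot hγ (S.coroot β)
  rw [hl] at h1
  rw [hk] at h2
  have hsymm := S.BB_symm (S.coroot β) (S.coroot γ)
  have hNb := S.four_le_BB hβ
  have hNg := S.four_le_BB hγ
  have e1 : 2 * S.BB (S.coroot β) (S.coroot γ) = l * S.BB (S.coroot β) (S.coroot β) := by
    rw [hsymm]; linarith [h1]
  have e2 : S.BB (S.coroot β) (S.coroot γ) = k * S.BB (S.coroot γ) (S.coroot γ) := by
    linarith [h2]
  have hlne : l ≠ 0 := by omega
  have hlne' : (l : ℝ) ≠ 0 := Int.cast_ne_zero.mpr hlne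
  have hBne : S.BB (S.coroot β) (S.coroot γ) ≠ 0 := by
    intro h0
    rw [h0] at e1
    have : (l : ℝ) * S.BB (S.coroot β) (S.coroot β) ≠ 0 :=
      mul_ne_zero hlne' (by linarith)
    exact this (by linarith [e1])
  have hkne : (k : ℝ) ≠ 0 := by
    intro h0
    rw [h0] at e2
    exact hBne (by linarith [e2])
  have hBsq : 2 * S.BB (S.coroot β) (S.coroot γ) ^ 2
      = ((l : ℝ) * k) * (S.BB (S.coroot β) (S.coroot β) * S.BB (S.coroot γ) (S.coroot γ)) := by
    linear_combination ((k : ℝ) * S.BB (S.coroot γ) (S.coroot γ)) * e1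
      + (2 * S.BB (S.coroot β) (S.coroot γ)) * e2
  have hcs := S.BB_sq_le (S.coroot β) (S.coroot γ)
  have hprodpos : 0 < S.BB (S.coroot β) (S.coroot β) * S.BB (S.coroot γ) (S.coroot γ) := by
    nlinarith
  have hlkpos : 0 < (l : ℝ) * k := by
    nlinarith [sq_nonneg (S.BB (S.coroot β) (S.coroot γ)),
      pow_pos (abs_pos.mpr hBne) 2, sq_abs (S.BB (S.coroot β) (S.coroot γ))]
  have hlkle : (l : ℝ) * k ≤ 2 := by nlinarith
  have hlkZ : 1 ≤ l * k ∧ l * k ≤ 2 := by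
    constructor
    · have : (0:ℝ) < ((l*k : ℤ) : ℝ) := by push_cast; exact hlkpos
      have := Int.cast_pos.mp this
      omega
    · have : ((l*k : ℤ) : ℝ) ≤ 2 := by push_cast; exact hlkle
      exact_mod_cast this
  rcases (by omega : l * k = 1 ∨ l * k = 2) with hlk | hlk
  · -- the good case
    have hcase : (l = 1 ∧ k = 1) ∨ (l = -1 ∧ k = -1) := Int.mul_eq_one_iff_eq_one_or_neg_one.mp hlk
    have hleq : k = l := by rcases hcase with ⟨h1', h2'⟩ | ⟨h1', h2'⟩ <;> omega
    have hlpm : l = 1 ∨ l = -1 := by rcases hcase with ⟨h1', _⟩ | ⟨h1', _⟩ <;> [exact Or.inl h1'; exact Or.inr h1']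
    have hgval : γ (S.coroot β) = 2 * l := by rw [hk, hleq]
    have hBval : S.BB (S.coroot β) (S.coroot γ) = l * S.BB (S.coroot γ) (S.coroot γ) := by
      rw [e2, hleq]
    have hNrel : S.BB (S.coroot β) (S.coroot β) = 2 * S.BB (S.coroot γ) (S.coroot γ) := by
      have : 2 * ((l:ℝ) * S.BB (S.coroot γ) (S.coroot γ)) = l * S.BB (S.coroot β) (S.coroot β) := by
        rw [← hBval]; linarith [e1]
      have := mul_left_cancel₀ hlne' (by linarith : (l:ℝ) * (2 * S.BB (S.coroot γ) (S.coroot γ)) = (l:ℝ) * S.BB (S.coroot β) (S.coroot β))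
      linarith [this]
    exact ⟨hlpm, hgval, hBval, hNrel⟩
  · -- l * k = 2 : Cauchy-Schwarz equality, contradiction with oddness
    exfalso
    have hBsq' : S.BB (S.coroot β) (S.coroot γ) ^ 2
        = S.BB (S.coroot β) (S.coroot β) * S.BB (S.coroot γ) (S.coroot γ) := by
      have : ((l : ℝ) * k) = 2 := by
        have : ((l*k : ℤ) : ℝ) = 2 := by rw [hlk]; norm_num
        push_cast at this; linarith
      nlinarith [hBsq]
    rcases S.eq_or_neg_of_sq hβ hγ hBsq' with h | h
    · -- γ = β : l = 2
      rw [h] at hl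
      have h2' : (l : ℝ) = 2 := by rw [← hl]; exact S.root_coroot_two β hβ
      have : l = 2 := by exact_mod_cast h2'
      omega
    · -- γ = -β : l = -2
      have hval : γ (S.coroot γ) = 2 := S.root_coroot_two γ hγ
      have hval2 : (-β) (S.coroot γ) = 2 := by rw [← h]; exact hval
      have : β (S.coroot γ) = -2 := by
        simp only [LinearMap.neg_apply] at hval2
        linarith
      rw [hl] at this
      have : l = -2 := by exact_mod_cast this
      omega


/-- **Primitivity**: the half of a coroot never lies in the coroot lattice. -/
theorem coroot_primitive {α : Module.Dual ℝ V} (hα : α ∈ S.R) {m : V}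
    (hmL : m ∈ S.corootLattice) (hm : S.coroot α = (2 : ℝ) • m) : False := by
  classical
  set T : Finset (Module.Dual ℝ V) := S.R.filter
    (fun β => ∃ m', m' ∈ S.corootLattice ∧ S.coroot β = (2 : ℝ) • m') with hT
  have hTR : ∀ β ∈ T, β ∈ S.R := fun β hβ => (Finset.mem_filter.mp hβ).1
  have hThalf : ∀ β ∈ T, ∃ m', m' ∈ S.corootLattice ∧ S.coroot β = (2 : ℝ) • m' :=
    fun β hβ => (Finset.mem_filter.mp hβ).2
  have hαT : α ∈ T := Finset.mem_filter.mpr ⟨hα, m, hmL, hm⟩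
  have hTne : ∀ a ∈ T, a ≠ -a := by
    intro a ha h
    apply S.ne_zero a (hTR a ha)
    have h2 : (2 : ℝ) • a = 0 := by
      rw [two_smul]
      nth_rewrite 2 [h]
      abel
    rcases smul_eq_zero.mp h2 with h' | h'
    · norm_num at h'
    · exact h'
  obtain ⟨P, hPT, hPcov, hPdisj⟩ := RedCrystRootSystemAux.exists_sel T hTne
  have hPR : ∀ β ∈ P, β ∈ S.R := fun β hβ => hTR β (hPT hβ)
  -- Step K1 : the sum of the chosen representatives takes even values on all coroots.
  have K1 : ∀ γ ∈ S.R, ∃ n : ℤ, (∑ β ∈ P, β) (S.coroot γ) = (n : ℝ) * 2 := by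
    intro γ hγ
    have hNg := S.four_le_BB hγ
    have hNgpos : (0:ℝ) < S.BB (S.coroot γ) (S.coroot γ) := by linarith
    have hsum : (∑ β ∈ P, β) (S.coroot γ) = ((∑ β ∈ P, S.pr β γ : ℤ) : ℝ) := by
      rw [LinearMap.sum_apply]
      push_cast
      exact Finset.sum_congr rfl fun β hβ => S.pr_spec (hPR β hβ) hγ
    suffices hEven : Even (∑ β ∈ P, S.pr β γ) by
      obtain ⟨u, hu⟩ := hEven
      exact ⟨u, by rw [hsum, hu]; push_cast; ring⟩
    -- the set of odd indices
    have exU : ∀ β ∈ P.filter (fun β => Odd (S.pr β γ)), ∃ δ,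
        ((δ ∈ P.filter (fun β => Odd (S.pr β γ))) ∧ δ ≠ β ∧
          S.BB (S.coroot δ) (S.coroot β - γ (S.coroot β) • S.coroot γ) ≠ 0) ∧
        ∀ δ₁ ∈ P, S.BB (S.coroot δ₁) (S.coroot β - γ (S.coroot β) • S.coroot γ) ≠ 0 → δ₁ = δ := by
      intro β hβO
      obtain ⟨hβP, hβodd⟩ := Finset.mem_filter.mp hβO
      have hβR := hPR β hβP
      obtain ⟨mb, hmbL, hmb⟩ := hThalf β (hPT hβP)
      have hl : β (S.coroot γ) = ((S.pr β γ : ℤ) : ℝ) := S.pr_spec hβR hγ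
      obtain ⟨hlpm, hgval, hBval, hNrel⟩ := S.odd_analysis hβR hγ hmbL hmb hl hβodd
      set l : ℤ := S.pr β γ with hldef
      have hll : (l:ℝ) * l = 1 := by
        rcases hlpm with h | h <;> rw [h] <;> norm_num
      obtain ⟨δ', hδ'R, hδ'eq⟩ := S.refl_coroot_mem γ hγ β hβR
      set w := S.coroot β - γ (S.coroot β) • S.coroot γ with hw
      have hwhalf : S.coroot δ' = (2:ℝ) • (mb - (l:ℝ) • S.coroot γ) := by
        rw [← hδ'eq, hw, hgval, hmb, smul_sub, smul_smul]
      have hm'L : mb - (l:ℝ) • S.coroot γ ∈ S.corootLattice := by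
        refine sub_mem hmbL ?_
        rw [Int.cast_smul_eq_zsmul]
        exact zsmul_mem (S.coroot_mem_lattice hγ) l
      have hδ'T : δ' ∈ T := Finset.mem_filter.mpr ⟨hδ'R, _, hm'L, hwhalf⟩
      have hBβw : S.BB (S.coroot β) w = 0 := by
        rw [hw, S.BB_sub_right, S.BB_smul_right, hgval, hBval]
        linear_combination hNrel - 2 * S.BB (S.coroot γ) (S.coroot γ) * hll
      have hBγw : S.BB (S.coroot γ) w = -(l:ℝ) * S.BB (S.coroot γ) (S.coroot γ) := by
        rw [hw, S.BB_sub_right, S.BB_smul_right, hgval,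
          S.BB_symm (S.coroot γ) (S.coroot β), hBval]
        ring
      have hNww : S.BB w w = S.BB (S.coroot β) (S.coroot β) := by
        have e := S.BB_expand_sub 1 (γ (S.coroot β)) (S.coroot β) (S.coroot γ)
        rw [one_smul] at e
        rw [hw, e, hgval, hBval]
        ring
      have hδ'γ : δ' (S.coroot γ) = -(l:ℝ) := by
        have h := S.BB_coroot hδ'R (S.coroot γ)
        rw [← hδ'eq] at h
        rw [hBγw, hNww, hNrel] at h
        have hzero : (δ' (S.coroot γ) + (l:ℝ)) * (2 * S.BB (S.coroot γ) (S.coroot γ)) = 0 := by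
          linear_combination -h
        rcases mul_eq_zero.mp hzero with h0 | h0
        · linarith
        · linarith
      rcases hPcov δ' hδ'T with hδ'P | hδ'P
      · refine ⟨δ', ⟨?_, ?_, ?_⟩, ?_⟩
        · refine Finset.mem_filter.mpr ⟨hδ'P, ?_⟩
          have h1 := S.pr_spec hδ'R hγ
          rw [hδ'γ] at h1
          have h2 : S.pr δ' γ = -l := by exact_mod_cast h1.symm
          rw [h2]
          exact hβodd.neg
        · intro h
          rw [h, hl] at hδ'γ
          have : l = 0 := by
            have : (l:ℝ) = 0 := by linarith
            exact_mod_cast this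
          omega
        · rw [← hδ'eq, hNww]
          have := S.four_le_BB hβR
          exact ne_of_gt (by linarith)
        · intro δ₁ hδ₁P hB₁
          rw [hδ'eq] at hB₁
          obtain ⟨m₁, hm₁L, hm₁⟩ := hThalf δ₁ (hPT hδ₁P)
          rcases S.half_ortho (hPR δ₁ hδ₁P) hδ'R hm₁L hm₁ hm'L hwhalf hB₁ with h | h
          · exact h.symm
          · exfalso
            have h2 : δ₁ = -δ' := by rw [h, neg_neg]
            exact hPdisj δ' hδ'P (h2 ▸ hδ₁P)
      · -- -δ' ∈ P
        have hnegR : -δ' ∈ S.R := hPR _ hδ'P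
        have hBnw : S.BB (S.coroot (-δ')) w ≠ 0 := by
          have h := S.BB_coroot hnegR w
          have hval : (-δ') w = -2 := by
            have h1 : (-δ') w = (-δ') (S.coroot δ') := by rw [hδ'eq]
            rw [h1, LinearMap.neg_apply, S.root_coroot_two δ' hδ'R]
          rw [hval] at h
          have hN := S.four_le_BB hnegR
          intro h0
          rw [S.BB_symm] at h0
          rw [h0] at h
          linarith
        refine ⟨-δ', ⟨?_, ?_, hBnw⟩, ?_⟩
        · refine Finset.mem_filter.mpr ⟨hδ'P, ?_⟩
          have hval : (-δ') (S.coroot γ) = (l:ℝ) := by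
            rw [LinearMap.neg_apply, hδ'γ]; ring
          have h1 := S.pr_spec hnegR hγ
          rw [hval] at h1
          have h2 : S.pr (-δ') γ = l := by exact_mod_cast h1.symm
          rw [h2]
          exact hβodd
        · intro h
          rw [h] at hBnw
          exact hBnw hBβw
        · intro δ₁ hδ₁P hB₁
          rw [hδ'eq] at hB₁
          obtain ⟨m₁, hm₁L, hm₁⟩ := hThalf δ₁ (hPT hδ₁P)
          rcases S.half_ortho (hPR δ₁ hδ₁P) hδ'R hm₁L hm₁ hm'L hwhalf hB₁ with h | h
          · exfalso
            exact hPdisj δ₁ hδ₁P (by rw [← h]; exact hδ'P)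
          · have := congrArg Neg.neg h
            rw [neg_neg] at this
            exact this.symm
    choose g hg using exU
    have hOsum : ∑ _β ∈ P.filter (fun β => Odd (S.pr β γ)), (1 : ZMod 2) = 0 := by
      refine Finset.sum_involution g ?_ ?_ (fun a ha => (hg a ha).1.1) ?_
      · intro a ha; decide
      · intro a ha _
        exact (hg a ha).1.2.1
      · intro a ha
        -- g (g a ha) _ = a
        set δ := g a ha with hδdef
        have hδO := (hg a ha).1.1
        obtain ⟨hδP, hδodd⟩ := Finset.mem_filter.mp hδO
        obtain ⟨haP, haodd⟩ := Finset.mem_filter.mp ha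
        have haR := hPR a haP
        have hδR := hPR δ hδP
        obtain ⟨ma, hmaL, hma⟩ := hThalf a (hPT haP)
        obtain ⟨md, hmdL, hmd⟩ := hThalf δ (hPT hδP)
        have hla : a (S.coroot γ) = ((S.pr a γ : ℤ) : ℝ) := S.pr_spec haR hγ
        have hld : δ (S.coroot γ) = ((S.pr δ γ : ℤ) : ℝ) := S.pr_spec hδR hγ
        obtain ⟨hapm, hagval, haBval, haNrel⟩ := S.odd_analysis haR hγ hmaL hma hla haodd
        obtain ⟨hdpm, hdgval, hdBval, hdNrel⟩ := S.odd_analysis hδR hγ hmdL hmd hld hδodd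
        have hadne : δ ≠ a := (hg a ha).1.2.1
        have hBad : S.BB (S.coroot a) (S.coroot δ) = 0 := by
          by_contra hB0
          rcases S.half_ortho haR hδR hmaL hma hmdL hmd hB0 with h | h
          · exact hadne h
          · exact hPdisj a haP (h ▸ hδP)
        have hBaw : S.BB (S.coroot a) (S.coroot δ - γ (S.coroot δ) • S.coroot γ) ≠ 0 := by
          rw [S.BB_sub_right, S.BB_smul_right, hBad, hdgval, haBval]
          have hNg4 := hNgpos
          have hprne : ((S.pr δ γ : ℤ):ℝ) * ((S.pr a γ : ℤ):ℝ) ≠ 0 := by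
            rcases hdpm with h1 | h1 <;> rcases hapm with h2 | h2 <;>
              rw [h1, h2] <;> norm_num
          intro h0
          apply hprne
          have : 2 * ((S.pr δ γ : ℤ):ℝ) * (((S.pr a γ : ℤ):ℝ) * S.BB (S.coroot γ) (S.coroot γ)) = 0 := by
            linarith
          have h2 := mul_eq_zero.mp this
          rcases h2 with h2 | h2
          · rcases mul_eq_zero.mp h2 with h3 | h3
            · norm_num at h3
            · rw [h3]; ring
          · rcases mul_eq_zero.mp h2 with h3 | h3
            · rw [h3]; ring
            · linarith
        exact ((hg δ hδO).2 a haP hBaw).symm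
    -- conclude evenness
    have hdvd : ((∑ β ∈ P, S.pr β γ : ℤ) : ZMod 2) = 0 := by
      push_cast
      rw [← Finset.sum_filter_add_sum_filter_not P (fun β => Odd (S.pr β γ))
        (fun β => ((S.pr β γ : ℤ) : ZMod 2))]
      have heven0 : ∑ β ∈ P.filter (fun β => ¬ Odd (S.pr β γ)),
          ((S.pr β γ : ℤ) : ZMod 2) = 0 := by
        apply Finset.sum_eq_zero
        intro β hβ
        have hev : Even (S.pr β γ) := Int.not_odd_iff_even.mp (Finset.mem_filter.mp hβ).2
        obtain ⟨u, hu⟩ := hev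
        rw [hu]
        push_cast
        have h2 : (2 : ZMod 2) = 0 := rfl
        ring_nf
        rw [show ((u:ZMod 2) * 2) = (u : ZMod 2) * 0 from by rw [h2]]
        ring
      have hodd1 : ∑ β ∈ P.filter (fun β => Odd (S.pr β γ)), ((S.pr β γ : ℤ) : ZMod 2)
          = ∑ _β ∈ P.filter (fun β => Odd (S.pr β γ)), (1 : ZMod 2) := by
        refine Finset.sum_congr rfl fun β hβ => ?_
        obtain ⟨u, hu⟩ := (Finset.mem_filter.mp hβ).2
        rw [hu]
        push_cast
        have h2 : (2 : ZMod 2) = 0 := rfl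
        rw [show ((2:ZMod 2) * (u:ZMod 2)) = 0 from by rw [h2]; ring]
        ring
      rw [hodd1, hOsum, heven0, add_zero]
    have hdvd2 := (ZMod.intCast_zmod_eq_zero_iff_dvd _ 2).mp hdvd
    obtain ⟨u, hu⟩ := hdvd2
    exact ⟨u, by omega⟩
  -- Step K2 : hence the sum takes even values on the whole lattice
  obtain ⟨n, hn⟩ := S.lattice_int (∑ β ∈ P, β) 2 K1 m hmL
  -- Step K3 : but its value at `m` is `±1`.
  have hαm : α m = 1 := by
    have h2 := S.root_coroot_two α hα
    rw [hm, map_smul, smul_eq_mul] at h2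
    linarith
  have hzero : ∀ β ∈ P, β ≠ α → β ≠ -α → β m = 0 := by
    intro β hβP hne hne'
    have hβR := hPR β hβP
    by_contra hbm
    have hval : β (S.coroot α) = 2 * β m := by rw [hm, map_smul, smul_eq_mul]
    have hβα : β (S.coroot α) ≠ 0 := by
      rw [hval]; exact mul_ne_zero two_ne_zero hbm
    have hB : S.BB (S.coroot β) (S.coroot α) ≠ 0 := by
      have h1 := S.BB_coroot hβR (S.coroot α)
      intro h0
      rw [S.BB_symm] at h0
      rw [h0] at h1
      have hNb := S.four_le_BB hβR
      have hne2 : β (S.coroot α) * S.BB (S.coroot β) (S.coroot β) ≠ 0 :=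
        mul_ne_zero hβα (by linarith)
      exact hne2 (by linarith)
    obtain ⟨mb, hmbL, hmb⟩ := hThalf β (hPT hβP)
    rcases S.half_ortho hβR hα hmbL hmb hmL hm hB with h | h
    · exact hne h.symm
    · exact hne' (by rw [h, neg_neg])
  have hval : (∑ β ∈ P, β) m = 1 ∨ (∑ β ∈ P, β) m = -1 := by
    rw [LinearMap.sum_apply]
    rcases hPcov α hαT with hαP | hαP
    · left
      rw [Finset.sum_eq_single_of_mem α hαP]
      · exact hαm
      · intro β hβ hne
        refine hzero β hβ hne ?_
        intro h
        rw [h] at hβ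
        exact hPdisj α hαP hβ
    · right
      rw [Finset.sum_eq_single_of_mem (-α) hαP]
      · rw [LinearMap.neg_apply, hαm]
      · intro β hβ hne
        refine hzero β hβ ?_ hne
        intro h
        rw [h] at hβ
        exact hPdisj α hβ hαP
  rcases hval with h | h <;> rw [h] at hn
  · have h1 : (1:ℤ) = n * 2 := by exact_mod_cast hn
    omega
  · have h1 : (-1:ℤ) = n * 2 := by exact_mod_cast hn
    omega

end RedCrystRootSystem

end Aux

/-- `e` fixes the point `t` of the torus `V ⧸ Λ`. This is expressed by asking for an
additive endomorphism of `V ⧸ Λ` covering `e` (which exists iff `e` preserves `Λ`,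
and is then unique) fixing `t`. -/
def FixesInTorus {V : Type*} [AddCommGroup V] [Module ℝ V]
    (Λ : AddSubgroup V) (e : V ≃ₗ[ℝ] V) (t : V ⧸ Λ) : Prop :=
  ∃ f : (V ⧸ Λ) →+ (V ⧸ Λ),
    (∀ x : V, f (QuotientAddGroup.mk x) = QuotientAddGroup.mk (e x)) ∧ f t = t

/-- Let `(V, R, α ↦ α∨)` be a reduced crystallographic root system with
coroot lattice `Q∨`, and let `Λ∨ ⊆ V` be a subgroup with `Q∨ ⊆ Λ∨` and `α(Λ∨) ⊆ ℤ` for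
every root `α`. If `Λ∨/Q∨` is torsion-free, then for every root `α` and every `x ∈ V`
with `x - s_α(x) ∈ Λ∨`, the real number `α(x)` is an integer. -/
theorem statement0 {V : Type*} [AddCommGroup V] [Module ℝ V] [FiniteDimensional ℝ V]
    (S : RedCrystRootSystem V) (Λ : AddSubgroup V)
    (hQΛ : S.corootLattice ≤ Λ)
    (hint : ∀ α ∈ S.R, ∀ v ∈ Λ, ∃ n : ℤ, α v = (n : ℝ))
    (htf : ∀ g : (↥Λ ⧸ (S.corootLattice.addSubgroupOf Λ)), g ≠ 0 → ¬IsOfFinAddOrder g)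
    (α : Module.Dual ℝ V) (hα : α ∈ S.R) (x : V)
    (hx : x - S.reflMap α x ∈ Λ) :
    ∃ n : ℤ, α x = (n : ℝ) := by
  have hu : α x • S.coroot α ∈ Λ := by
    have h : x - S.reflMap α x = α x • S.coroot α := by
      rw [S.reflMap_apply, sub_sub_cancel]
    rwa [h] at hx
  obtain ⟨n, hn⟩ := hint α hα _ hu
  have hval : α (α x • S.coroot α) = 2 * α x := by
    rw [map_smul, smul_eq_mul, S.root_coroot_two α hα]; ring
  rw [hval] at hn
  rcases Int.even_or_odd n with ⟨k, hk⟩ | ⟨k, hk⟩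
  · refine ⟨k, ?_⟩
    have : (n : ℝ) = 2 * k := by rw [hk]; push_cast; ring
    rw [this] at hn
    linarith
  · exfalso
    have hw : α x • S.coroot α - (k : ℝ) • S.coroot α ∈ Λ := by
      refine sub_mem hu ?_
      rw [Int.cast_smul_eq_zsmul]
      exact zsmul_mem (hQΛ (S.coroot_mem_lattice hα)) k
    have hwval : α x • S.coroot α - (k : ℝ) • S.coroot α = (2⁻¹ : ℝ) • S.coroot α := by
      rw [← sub_smul]
      congr 1
      have hcast : (n : ℝ) = 2 * k + 1 := by rw [hk]; push_cast; ring
      rw [hcast] at hn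
      have : α x = (k : ℝ) + 2⁻¹ := by linarith
      rw [this]; ring
    rw [hwval] at hw
    set Q := S.corootLattice.addSubgroupOf Λ with hQ
    set e : ↥Λ := ⟨(2⁻¹ : ℝ) • S.coroot α, hw⟩ with he
    have h2e : (2 : ℕ) • e ∈ Q := by
      rw [hQ, AddSubgroup.mem_addSubgroupOf]
      have hcoe : (((2 : ℕ) • e : ↥Λ) : V) = S.coroot α := by
        rw [AddSubgroup.coe_nsmul]
        rw [he]
        show (2 : ℕ) • ((2⁻¹ : ℝ) • S.coroot α) = S.coroot α
        rw [two_nsmul, ← two_smul ℝ, smul_smul]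
        norm_num
      rw [hcoe]
      exact S.coroot_mem_lattice hα
    have h2q : (2 : ℕ) • (QuotientAddGroup.mk' Q e) = 0 := by
      rw [← map_nsmul]
      exact (QuotientAddGroup.eq_zero_iff _).mpr h2e
    have hq0 : QuotientAddGroup.mk' Q e = 0 := by
      by_contra hne
      exact htf _ hne (isOfFinAddOrder_iff_nsmul_eq_zero.mpr ⟨2, by norm_num, h2q⟩)
    have hmem : ((2⁻¹ : ℝ) • S.coroot α) ∈ S.corootLattice := by
      have h := (QuotientAddGroup.eq_zero_iff e).mp hq0
      rwa [AddSubgroup.mem_addSubgroupOf] at h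
    exact S.coroot_primitive hα hmem (by rw [smul_smul]; norm_num)
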